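/- arXiv:1910.11442 — 2 statements merged into one kernel-verified Lean document; each statement's English description precedes it below -/
import Mathlib

section
/- Let d ≥ 1, h > 0, and let u : ℝ^d → [0,1] be measurable and Lebesgue integrable. Then ∫_{ℝ^d} |u − G_h ⋆ u| dx ≤ 2·( ∫_{ℝ^d} u dx − ∫_{ℝ^d} u·(G_h ⋆ u) dx ). Equivalently, ∫ |u − G_h ⋆ u| dx ≤ 2√h·E_h(u) where E_h(u) = (1/√h)·∫ (1−u)·(G_h ⋆ u) dx. -/
open MeasureTheory

/-- The Gaussian heat kernel `G_h(z) = (2πh)^{-d/2} exp(-|z|²/(2h))` on `ℝ^d`. -/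
noncomputable def gauss (d : ℕ) (h : ℝ) (z : EuclideanSpace ℝ (Fin d)) : ℝ :=
  (2 * Real.pi * h) ^ (-(d : ℝ) / 2) * Real.exp (-‖z‖ ^ 2 / (2 * h))

/-- Convolution of two functions on `ℝ^d` w.r.t. Lebesgue measure. -/
noncomputable def conv (d : ℕ) (f g : EuclideanSpace ℝ (Fin d) → ℝ)
    (x : EuclideanSpace ℝ (Fin d)) : ℝ :=
  ∫ y, f (x - y) * g y

lemma integrable_rexp_gauss {d : ℕ} {b : ℝ} (hb : 0 < b) :
    Integrable (fun v : EuclideanSpace ℝ (Fin d) => Real.exp (-b * ‖v‖ ^ 2)) := by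
  have H := GaussianFourier.integrable_cexp_neg_mul_sq_norm_add
    (V := EuclideanSpace ℝ (Fin d)) (b := (b : ℂ)) (by simpa using hb) 0 0
  have := H.norm
  refine this.congr (Filter.EventuallyEq.of_eq ?_)
  funext v
  simp [Complex.norm_exp]
  left; norm_cast

lemma gauss_nonneg (d : ℕ) {h : ℝ} (hh : 0 < h) (z : EuclideanSpace ℝ (Fin d)) :
    0 ≤ gauss d h z := by
  unfold gauss; positivity

lemma gauss_eq (d : ℕ) {h : ℝ} (hh : 0 < h) :
    gauss d h = fun z : EuclideanSpace ℝ (Fin d) =>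
      (2 * Real.pi * h) ^ (-(d : ℝ) / 2) * Real.exp (-(2 * h)⁻¹ * ‖z‖ ^ 2) := by
  funext z
  unfold gauss
  congr 1
  field_simp

lemma gauss_integrable (d : ℕ) {h : ℝ} (hh : 0 < h) : Integrable (gauss d h) := by
  rw [gauss_eq d hh]
  exact (integrable_rexp_gauss (by positivity)).const_mul _

lemma gauss_integral (d : ℕ) {h : ℝ} (hh : 0 < h) : ∫ z, gauss d h z = 1 := by
  have hb : (0:ℝ) < (2 * h)⁻¹ := by positivity
  have key := GaussianFourier.integral_rexp_neg_mul_sq_norm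
    (V := EuclideanSpace ℝ (Fin d)) hb
  rw [gauss_eq d hh]
  rw [integral_const_mul, key, finrank_euclideanSpace_fin]
  have h1 : Real.pi / (2 * h)⁻¹ = 2 * Real.pi * h := by field_simp
  rw [h1, ← Real.rpow_add (by positivity),
    show (-(d:ℝ)/2 + (d:ℝ)/2) = 0 by ring, Real.rpow_zero]

theorem stmt_10 (d : ℕ) (hd : 1 ≤ d) (h : ℝ) (hh : 0 < h)
    (u : EuclideanSpace ℝ (Fin d) → ℝ)
    (hu_meas : Measurable u) (hu_range : ∀ x, u x ∈ Set.Icc (0 : ℝ) 1)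
    (hu_int : Integrable u) :
    ∫ x, |u x - conv d (gauss d h) u x|
      ≤ 2 * ((∫ x, u x) - ∫ x, u x * conv d (gauss d h) u x) := by
  set G := gauss d h with hG
  set v := conv d G u with hv
  have hGint : Integrable G := gauss_integrable d hh
  have hGmass : ∫ z, G z = 1 := gauss_integral d hh
  -- v is mathlib's convolution u ⋆ G
  have hv_conv : v = MeasureTheory.convolution u G (ContinuousLinearMap.mul ℝ ℝ) volume := by
    funext x
    simp only [hv, conv, MeasureTheory.convolution]
    congr 1
    funext y
    simp [mul_comm]
  have hv_int : Integrable v := by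
    rw [hv_conv]
    exact hu_int.integrable_convolution _ hGint
  have hv_integral : ∫ x, v x = ∫ x, u x := by
    rw [hv_conv, integral_convolution _ hu_int hGint, hGmass]
    simp
  -- pointwise bounds on v
  have hv_nonneg : ∀ x, 0 ≤ v x := by
    intro x
    refine integral_nonneg fun y => ?_
    exact mul_nonneg (gauss_nonneg d hh _) (hu_range y).1
  have hGx_int : ∀ x, Integrable (fun y => G (x - y)) := fun x => hGint.comp_sub_left x
  have hv_le_one : ∀ x, v x ≤ 1 := by
    intro x
    have hle : ∀ y, G (x - y) * u y ≤ G (x - y) := by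
      intro y
      nth_rewrite 2 [← mul_one (G (x - y))]
      exact mul_le_mul_of_nonneg_left (hu_range y).2 (gauss_nonneg d hh _)
    calc v x ≤ ∫ y, G (x - y) := by
              refine integral_mono_of_nonneg (Filter.Eventually.of_forall fun y =>
                mul_nonneg (gauss_nonneg d hh _) (hu_range y).1) (hGx_int x)
                (Filter.Eventually.of_forall hle)
      _ = ∫ z, G z := by rw [integral_sub_left_eq_self G volume x]
      _ = 1 := hGmass
  -- integrability of the various integrands
  have huv_int : Integrable (fun x => u x * v x) := by
    refine hv_int.mono' (hu_int.aestronglyMeasurable.mul hv_int.aestronglyMeasurable) ?_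
    refine Filter.Eventually.of_forall fun x => ?_
    rw [Real.norm_eq_abs, abs_mul, abs_of_nonneg (hu_range x).1, abs_of_nonneg (hv_nonneg x)]
    exact mul_le_of_le_one_left (hv_nonneg x) (hu_range x).2
  -- pointwise key inequality
  have hkey : ∀ x, |u x - v x| ≤ u x + v x - 2 * (u x * v x) := by
    intro x
    have h1 := (hu_range x).1; have h2 := (hu_range x).2
    have h3 := hv_nonneg x; have h4 := hv_le_one x
    rcases abs_cases (u x - v x) with ⟨he, _⟩ | ⟨he, _⟩ <;> rw [he] <;> nlinarith
  calc ∫ x, |u x - v x| ≤ ∫ x, (u x + v x - 2 * (u x * v x)) := by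
        refine integral_mono ((hu_int.sub hv_int).abs) ?_ hkey
        exact (hu_int.add hv_int).sub (huv_int.const_mul 2)
    _ = (∫ x, u x) + (∫ x, v x) - 2 * ∫ x, u x * v x := by
        have h1 : Integrable (fun x => u x + v x) := hu_int.add hv_int
        have h2 : Integrable (fun x => 2 * (u x * v x)) := huv_int.const_mul 2
        rw [integral_sub h1 h2, integral_add hu_int hv_int, integral_const_mul]
    _ = 2 * ((∫ x, u x) - ∫ x, u x * v x) := by rw [hv_integral]; ring
end

section
/- Let d ≥ 1, h > 0, and let χ, χ' : ℝ^d → {0,1} be measurable and Lebesgue integrable. Then ∫_{ℝ^d} |χ − χ'| dx ≤ ∫_{ℝ^d} (G_{h/2} ⋆ (χ − χ'))² dx + ∫_{ℝ^d} |χ − G_h ⋆ χ| dx + ∫_{ℝ^d} |χ' − G_h ⋆ χ'| dx. -/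
open MeasureTheory

open Real Convolution

section aux

variable {d : ℕ}

local notation "E" => EuclideanSpace ℝ (Fin d)

lemma gauss_nonneg_s14 {t : ℝ} (ht : 0 < t) (z : E) : 0 ≤ gauss d t z := by
  unfold gauss
  positivity

lemma gauss_le {t : ℝ} (ht : 0 < t) (z : E) :
    gauss d t z ≤ (2 * Real.pi * t) ^ (-(d : ℝ) / 2) := by
  unfold gauss
  have h1 : Real.exp (-‖z‖ ^ 2 / (2 * t)) ≤ 1 := by
    apply Real.exp_le_one_iff.mpr
    have : (0:ℝ) ≤ ‖z‖ ^ 2 / (2 * t) := by positivity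
    rw [neg_div]
    linarith
  have h2 : (0:ℝ) < (2 * Real.pi * t) ^ (-(d : ℝ) / 2) := by
    apply Real.rpow_pos_of_pos
    positivity
  nlinarith

lemma gauss_continuous {t : ℝ} : Continuous (gauss d t) := by
  unfold gauss
  fun_prop

lemma gauss_even {t : ℝ} (z : E) : gauss d t (-z) = gauss d t z := by
  simp [gauss]

lemma integrable_exp_neg_mul_sq_norm {b : ℝ} (hb : 0 < b) :
    Integrable (fun z : E => Real.exp (-b * ‖z‖ ^ 2)) := by
  have h := (GaussianFourier.integrable_cexp_neg_mul_sq_norm_add (V := E)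
      (b := (b : ℂ)) (by simpa using hb) 0 0).norm
  apply h.congr
  filter_upwards with z
  rw [Complex.norm_exp]
  simp only [zero_mul, add_zero, ← Complex.ofReal_pow, ← Complex.ofReal_mul,
    ← Complex.ofReal_neg, Complex.ofReal_re]

lemma integrable_gauss {t : ℝ} (ht : 0 < t) : Integrable (gauss d t) := by
  have h := (integrable_exp_neg_mul_sq_norm (d := d) (b := 1 / (2 * t))
      (by positivity)).const_mul ((2 * Real.pi * t) ^ (-(d : ℝ) / 2))
  apply h.congr
  filter_upwards with z
  unfold gauss
  congr 1
  congr 1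
  field_simp

lemma gauss_conv {t : ℝ} (ht : 0 < t) (w : E) :
    ∫ z : E, gauss d t (w - z) * gauss d t z = gauss d (2 * t) w := by
  have hπ := Real.pi_pos
  set A : ℝ := (2 * Real.pi * t) ^ (-(d : ℝ) / 2) with hA
  have expand : ∀ z : E, ‖w - z‖ ^ 2 + ‖z‖ ^ 2
      = 2 * ‖z - (2:ℝ)⁻¹ • w‖ ^ 2 + ‖w‖ ^ 2 / 2 := by
    intro z
    have h1 : ‖w - z‖ ^ 2 = ‖w‖ ^ 2 - 2 * inner ℝ w z + ‖z‖ ^ 2 :=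
      norm_sub_sq_real w z
    have h2 : ‖z - (2:ℝ)⁻¹ • w‖ ^ 2
        = ‖z‖ ^ 2 - 2 * inner ℝ z ((2:ℝ)⁻¹ • w) + ‖(2:ℝ)⁻¹ • w‖ ^ 2 :=
      norm_sub_sq_real z ((2:ℝ)⁻¹ • w)
    have h3 : (inner ℝ z ((2:ℝ)⁻¹ • w) : ℝ) = (2:ℝ)⁻¹ * inner ℝ z w :=
      real_inner_smul_right z w _
    have h4 : ‖(2:ℝ)⁻¹ • w‖ ^ 2 = (2:ℝ)⁻¹ ^ 2 * ‖w‖ ^ 2 := by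
      rw [norm_smul]
      simp [mul_pow]
    have h5 : (inner ℝ w z : ℝ) = inner ℝ z w := real_inner_comm z w
    rw [h1, h2, h3, h4, h5]
    ring
  have step1 : ∀ z : E, gauss d t (w - z) * gauss d t z
      = (A ^ 2 * Real.exp (-‖w‖ ^ 2 / (4 * t)))
        * Real.exp (-(1 / t) * ‖z - (2:ℝ)⁻¹ • w‖ ^ 2) := by
    intro z
    unfold gauss
    rw [← hA]
    rw [show A * Real.exp (-‖w - z‖ ^ 2 / (2 * t)) * (A * Real.exp (-‖z‖ ^ 2 / (2 * t)))
        = A ^ 2 * (Real.exp (-‖w - z‖ ^ 2 / (2 * t)) * Real.exp (-‖z‖ ^ 2 / (2 * t))) by ring]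
    rw [← Real.exp_add, mul_assoc, ← Real.exp_add]
    congr 2
    have hz := expand z
    set a := ‖w - z‖ with ha
    set bb := ‖z‖ with hbb
    set c := ‖z - (2:ℝ)⁻¹ • w‖ with hc
    set e := ‖w‖ with he
    field_simp
    linear_combination (-4) * hz
  rw [MeasureTheory.integral_congr_ae (Filter.Eventually.of_forall step1)]
  rw [MeasureTheory.integral_const_mul]
  rw [MeasureTheory.integral_sub_right_eq_self
      (fun z : E => Real.exp (-(1 / t) * ‖z‖ ^ 2)) ((2:ℝ)⁻¹ • w)]
  rw [GaussianFourier.integral_rexp_neg_mul_sq_norm (by positivity : (0:ℝ) < 1 / t)]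
  rw [finrank_euclideanSpace_fin]
  unfold gauss
  have h1 : Real.pi / (1 / t) = Real.pi * t := by field_simp
  have h2 : -‖w‖ ^ 2 / (2 * (2 * t)) = -‖w‖ ^ 2 / (4 * t) := by ring
  rw [h1, h2]
  have hpt : (0:ℝ) < Real.pi * t := by positivity
  have key : A ^ 2 * (Real.pi * t) ^ ((d:ℝ) / 2)
      = (2 * Real.pi * (2 * t)) ^ (-(d:ℝ) / 2) := by
    rw [hA]
    rw [show (2:ℝ) * Real.pi * t = 2 * (Real.pi * t) by ring,
        show (2:ℝ) * Real.pi * (2 * t) = 2 * 2 * (Real.pi * t) by ring]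
    rw [Real.mul_rpow (by norm_num) hpt.le,
        Real.mul_rpow (by norm_num : (0:ℝ) ≤ 2 * 2) hpt.le,
        Real.mul_rpow (by norm_num : (0:ℝ) ≤ 2) (by norm_num : (0:ℝ) ≤ 2)]
    rw [show (d:ℝ)/2 = -(-(d:ℝ)/2) by ring, Real.rpow_neg hpt.le]
    have h3 : ((Real.pi * t) ^ (-(d:ℝ)/2)) ≠ 0 := by positivity
    field_simp
  rw [show A ^ 2 * Real.exp (-‖w‖ ^ 2 / (4 * t)) * (Real.pi * t) ^ ((d:ℝ) / 2)
      = (A ^ 2 * (Real.pi * t) ^ ((d:ℝ) / 2)) * Real.exp (-‖w‖ ^ 2 / (4 * t)) by ring, key]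


lemma conv_eq (f g : E → ℝ) :
    conv d f g = (g ⋆[ContinuousLinearMap.mul ℝ ℝ, volume] f) := by
  funext x
  simp only [conv, convolution, ContinuousLinearMap.mul_apply']
  simp_rw [mul_comm]

lemma conv_integrable {f g : E → ℝ} (hf : Integrable f) (hg : Integrable g) :
    Integrable (conv d f g) := by
  rw [conv_eq]
  exact hg.integrable_convolution _ hf

lemma gauss_semigroup {t : ℝ} (ht : 0 < t) (x y : E) :
    gauss d (2 * t) (x - y) = ∫ z : E, gauss d t (x - z) * gauss d t (z - y) := by
  calc gauss d (2 * t) (x - y) = ∫ z : E, gauss d t ((x - y) - z) * gauss d t z :=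
        (gauss_conv ht (x - y)).symm
    _ = ∫ z : E, gauss d t (x - (z + y)) * gauss d t ((z + y) - y) := by
        congr 1; funext z
        have e1 : x - (z + y) = (x - y) - z := by abel
        have e2 : (z + y) - y = z := by abel
        rw [e1, e2]
    _ = ∫ z : E, gauss d t (x - z) * gauss d t (z - y) :=
        MeasureTheory.integral_add_right_eq_self
          (fun z : E => gauss d t (x - z) * gauss d t (z - y)) y

lemma gauss_even' {t : ℝ} (a b : E) : gauss d t (a - b) = gauss d t (b - a) := by
  rw [show a - b = -(b - a) by abel, gauss_even]

lemma conv_self_adjoint {t : ℝ} (ht : 0 < t) {u : E → ℝ}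
    (hu_int : Integrable u) (hu_meas : Measurable u) (hu_bd : ∀ x, |u x| ≤ 1) :
    ∫ x, u x * conv d (gauss d (2 * t)) u x
      = ∫ z, (conv d (gauss d t) u z) ^ 2 := by
  have hK_int : Integrable (gauss d t) := integrable_gauss ht
  set v : E → ℝ := conv d (gauss d t) u with hv
  have hv_int : Integrable v := conv_integrable hK_int hu_int
  have hKbd : ∀ z : E, ‖gauss d t z‖ ≤ (2 * Real.pi * t) ^ (-(d:ℝ)/2) := fun z => by
    rw [Real.norm_eq_abs, abs_of_nonneg (gauss_nonneg_s14 ht _)]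
    exact gauss_le ht _
  -- Step A (pointwise): conv (gauss (2t)) u = conv (gauss t) v
  have claimA : ∀ x, conv d (gauss d (2 * t)) u x = conv d (gauss d t) v x := by
    intro x
    have base : Integrable (fun p : E × E => u p.2 * gauss d t (p.1 - p.2))
        (volume.prod volume) :=
      hu_int.convolution_integrand (ContinuousLinearMap.mul ℝ ℝ) hK_int
    have base2 : Integrable (fun p : E × E => u p.1 * gauss d t (p.2 - p.1))
        (volume.prod volume) := base.swap
    have prodInt : Integrable
        (fun p : E × E => gauss d t (x - p.2) * (u p.1 * gauss d t (p.2 - p.1)))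
        (volume.prod volume) := by
      apply base2.bdd_mul (c := (2 * Real.pi * t) ^ (-(d:ℝ)/2))
      · exact (gauss_continuous.comp (continuous_const.sub continuous_snd)).aestronglyMeasurable
      · exact Filter.Eventually.of_forall fun p => hKbd _
    calc conv d (gauss d (2 * t)) u x = ∫ y, gauss d (2 * t) (x - y) * u y := rfl
      _ = ∫ y, (∫ z, gauss d t (x - z) * gauss d t (z - y)) * u y := by
          congr 1; funext y; rw [← gauss_semigroup ht x y]
      _ = ∫ y, ∫ z, gauss d t (x - z) * (u y * gauss d t (z - y)) := by
          congr 1; funext y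
          rw [← MeasureTheory.integral_mul_const]
          congr 1; funext z; ring
      _ = ∫ z, ∫ y, gauss d t (x - z) * (u y * gauss d t (z - y)) :=
          MeasureTheory.integral_integral_swap prodInt
      _ = ∫ z, gauss d t (x - z) * ∫ y, u y * gauss d t (z - y) := by
          congr 1; funext z; rw [MeasureTheory.integral_const_mul]
      _ = ∫ z, gauss d t (x - z) * v z := by
          congr 1; funext z
          congr 1
          show (∫ y, u y * gauss d t (z - y)) = ∫ y, gauss d t (z - y) * u y
          congr 1; funext y; ring
      _ = conv d (gauss d t) v x := rfl
  -- Step B (Fubini / self-adjointness)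
  have baseB : Integrable (fun p : E × E => v p.2 * gauss d t (p.1 - p.2))
      (volume.prod volume) :=
    hv_int.convolution_integrand (ContinuousLinearMap.mul ℝ ℝ) hK_int
  have prodIntB : Integrable
      (fun p : E × E => u p.1 * (v p.2 * gauss d t (p.1 - p.2))) (volume.prod volume) := by
    apply baseB.bdd_mul (c := 1)
    · exact (hu_meas.comp measurable_fst).aestronglyMeasurable
    · exact Filter.Eventually.of_forall fun p => by rw [Real.norm_eq_abs]; exact hu_bd _
  have hEval : ∀ z : E, (∫ x, u x * gauss d t (x - z)) = v z := by
    intro z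
    show _ = ∫ y, gauss d t (z - y) * u y
    congr 1; funext x
    rw [gauss_even' x z]; ring
  calc ∫ x, u x * conv d (gauss d (2 * t)) u x = ∫ x, u x * conv d (gauss d t) v x := by
        congr 1; funext x; rw [claimA x]
    _ = ∫ x, ∫ z, u x * (v z * gauss d t (x - z)) := by
        congr 1; funext x
        rw [MeasureTheory.integral_const_mul]
        show u x * conv d (gauss d t) v x = _
        congr 1
        show (∫ z, gauss d t (x - z) * v z) = ∫ z, v z * gauss d t (x - z)
        congr 1; funext z; ring
    _ = ∫ z, ∫ x, u x * (v z * gauss d t (x - z)) :=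
        MeasureTheory.integral_integral_swap prodIntB
    _ = ∫ z, v z * ∫ x, u x * gauss d t (x - z) := by
        congr 1; funext z
        rw [show (fun x => u x * (v z * gauss d t (x - z)))
            = fun x => v z * (u x * gauss d t (x - z)) from funext fun x => by ring,
          MeasureTheory.integral_const_mul]
    _ = ∫ z, (v z) ^ 2 := by
        congr 1; funext z
        rw [hEval z]; ring

end aux

theorem stmt_14 (d : ℕ) (hd : 1 ≤ d) (h : ℝ) (hh : 0 < h)
    (χ χ' : EuclideanSpace ℝ (Fin d) → ℝ)
    (hχ_meas : Measurable χ) (hχ'_meas : Measurable χ')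
    (hχ_val : ∀ x, χ x = 0 ∨ χ x = 1) (hχ'_val : ∀ x, χ' x = 0 ∨ χ' x = 1)
    (hχ_int : Integrable χ) (hχ'_int : Integrable χ') :
    ∫ x, |χ x - χ' x|
      ≤ (∫ x, (conv d (gauss d (h / 2)) (fun y => χ y - χ' y) x) ^ 2)
        + (∫ x, |χ x - conv d (gauss d h) χ x|)
        + ∫ x, |χ' x - conv d (gauss d h) χ' x| := by
  have hh2 : 0 < h / 2 := by linarith
  set u : EuclideanSpace ℝ (Fin d) → ℝ := fun y => χ y - χ' y with hu
  have hu_meas : Measurable u := hχ_meas.sub hχ'_meas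
  have hu_int : Integrable u := hχ_int.sub hχ'_int
  have hu_bd : ∀ x, |u x| ≤ 1 := by
    intro x
    rcases hχ_val x with h1 | h1 <;> rcases hχ'_val x with h2 | h2 <;>
      simp [hu, h1, h2]
  have habs : ∀ x, |u x| = u x ^ 2 := by
    intro x
    rcases hχ_val x with h1 | h1 <;> rcases hχ'_val x with h2 | h2 <;>
      simp [hu, h1, h2]
  have hG_int : Integrable (gauss d h) := integrable_gauss hh
  have hGu_int : Integrable (conv d (gauss d h) u) := conv_integrable hG_int hu_int
  have hGχ_int : Integrable (conv d (gauss d h) χ) := conv_integrable hG_int hχ_int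
  have hGχ'_int : Integrable (conv d (gauss d h) χ') := conv_integrable hG_int hχ'_int
  have int2 : Integrable (fun x => u x * conv d (gauss d h) u x) :=
    hGu_int.bdd_mul (c := 1) hu_meas.aestronglyMeasurable
      (Filter.Eventually.of_forall fun x => by rw [Real.norm_eq_abs]; exact hu_bd x)
  have int1 : Integrable (fun x => u x * (u x - conv d (gauss d h) u x)) :=
    (hu_int.sub hGu_int).bdd_mul (c := 1) hu_meas.aestronglyMeasurable
      (Filter.Eventually.of_forall fun x => by rw [Real.norm_eq_abs]; exact hu_bd x)
  have hgoal : (∫ x, |χ x - χ' x|) = ∫ x, |u x| := by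
    congr 1
  have split : (∫ x, |u x|)
      = (∫ x, u x * (u x - conv d (gauss d h) u x))
        + ∫ x, u x * conv d (gauss d h) u x := by
    rw [← integral_add int1 int2]
    congr 1; funext x
    rw [habs x]; ring
  have term2 : (∫ x, u x * conv d (gauss d h) u x)
      = ∫ x, (conv d (gauss d (h / 2)) u x) ^ 2 := by
    have hkey := conv_self_adjoint (d := d) (t := h / 2) hh2 hu_int hu_meas hu_bd
    rw [show 2 * (h / 2) = h by ring] at hkey
    exact hkey
  have term1 : (∫ x, u x * (u x - conv d (gauss d h) u x))
      ≤ ∫ x, |u x - conv d (gauss d h) u x| := by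
    apply integral_mono int1 (hu_int.sub hGu_int).abs
    intro x
    calc u x * (u x - conv d (gauss d h) u x)
        ≤ |u x * (u x - conv d (gauss d h) u x)| := le_abs_self _
      _ = |u x| * |u x - conv d (gauss d h) u x| := abs_mul _ _
      _ ≤ 1 * |u x - conv d (gauss d h) u x| :=
          mul_le_mul_of_nonneg_right (hu_bd x) (abs_nonneg _)
      _ = |u x - conv d (gauss d h) u x| := one_mul _
  have hMbd : ∀ z : EuclideanSpace ℝ (Fin d), ‖gauss d h z‖ ≤ (2 * Real.pi * h) ^ (-(d:ℝ)/2) :=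
    fun z => by
      rw [Real.norm_eq_abs, abs_of_nonneg (gauss_nonneg_s14 hh _)]
      exact gauss_le hh _
  have hconv_sub : ∀ x, conv d (gauss d h) u x
      = conv d (gauss d h) χ x - conv d (gauss d h) χ' x := by
    intro x
    have intχ : Integrable (fun y => gauss d h (x - y) * χ y) :=
      hχ_int.bdd_mul
        (gauss_continuous.comp (continuous_const.sub continuous_id)).aestronglyMeasurable
        (Filter.Eventually.of_forall fun y => hMbd _)
    have intχ' : Integrable (fun y => gauss d h (x - y) * χ' y) :=
      hχ'_int.bdd_mul
        (gauss_continuous.comp (continuous_const.sub continuous_id)).aestronglyMeasurable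
        (Filter.Eventually.of_forall fun y => hMbd _)
    show (∫ y, gauss d h (x - y) * u y) = (∫ y, gauss d h (x - y) * χ y) - ∫ y, gauss d h (x - y) * χ' y
    rw [← integral_sub intχ intχ']
    congr 1; funext y
    show gauss d h (x - y) * (χ y - χ' y) = _
    ring
  have term1' : (∫ x, |u x - conv d (gauss d h) u x|)
      ≤ (∫ x, |χ x - conv d (gauss d h) χ x|) + ∫ x, |χ' x - conv d (gauss d h) χ' x| := by
    have i1 : Integrable (fun x => |χ x - conv d (gauss d h) χ x|) :=
      (hχ_int.sub hGχ_int).abs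
    have i2 : Integrable (fun x => |χ' x - conv d (gauss d h) χ' x|) :=
      (hχ'_int.sub hGχ'_int).abs
    rw [← integral_add i1 i2]
    apply integral_mono (hu_int.sub hGu_int).abs (i1.add i2)
    intro x
    simp only [Pi.sub_apply, Pi.add_apply]
    rw [hconv_sub x]
    have hux : u x = χ x - χ' x := rfl
    calc |u x - (conv d (gauss d h) χ x - conv d (gauss d h) χ' x)|
        = |(χ x - conv d (gauss d h) χ x) - (χ' x - conv d (gauss d h) χ' x)| := by
          rw [hux]; ring_nf
      _ ≤ |χ x - conv d (gauss d h) χ x| + |χ' x - conv d (gauss d h) χ' x| := abs_sub _ _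
  rw [hgoal, split, term2]
  linarith
end
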